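/- Let η = (K1, K2, K3, K4, κ3, κ6, κ9, κ12) be a tuple of positive real parameters with a(η) ≥ 0. Then p_η(x1,x2,x3) ≥ 0 for all x1 > 0, x2 > 0, x3 > 0 if and only if p_{η,H}(x1,x3) ≥ 0 for all x1 > 0, x3 > 0. -/

import Mathlib

/-- The trivariate polynomial `p_η` governing monostationarity of dual phosphorylation. -/
def pEta (K1 K2 K3 K4 κ3 κ6 κ9 κ12 x1 x2 x3 : ℝ) : ℝ :=
  K2 * κ3 * (κ3 * κ12 - κ6 * κ9) *
      (K2 * K4 * κ3 * κ9 * x1 ^ 4 * x3 ^ 2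
        + K1 * K3 * κ6 * κ12 *
            (x1 ^ 3 * x2 ^ 2 * x3 + x1 ^ 2 * x2 ^ 3 * x3 + x1 ^ 2 * x2 ^ 2 * x3 ^ 2)
        + K2 * K3 * κ3 * κ12 * x1 ^ 3 * x2 * x3 ^ 2)
    + K1 * K2 * K3 * κ3 * κ6 * κ12 * ((K2 + K3) * κ3 * κ12 - (K1 + K4) * κ6 * κ9)
        * x1 ^ 2 * x2 ^ 2 * x3
    + K1 * κ6 *
        (K2 ^ 2 * K4 * κ3 ^ 2 * κ9 ^ 2 * x1 ^ 4 * x3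
          + 2 * K2 * K3 * K4 * κ3 ^ 2 * κ9 * κ12 * x1 ^ 3 * x2 * x3
          + K1 * K2 * K3 * κ3 * κ6 * κ12 * (κ9 + κ12) * x1 ^ 2 * x2 ^ 3
          + K1 * K2 * K3 * K4 * κ3 * κ6 * κ9 * κ12 * x1 ^ 2 * x2 ^ 2
          + K1 * K3 ^ 2 * κ6 * κ12 ^ 2 * (κ3 + κ6) * x1 * x2 ^ 4
          + 2 * K1 * K2 * K3 * κ3 * κ6 * κ12 ^ 2 * x1 * x2 ^ 3 * x3
          + K1 * K2 * K3 ^ 2 * κ3 * κ6 * κ12 ^ 2 * x1 * x2 ^ 3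
          + K1 * K3 ^ 2 * κ6 ^ 2 * κ12 ^ 2 * x2 ^ 4 * x3
          + K1 ^ 2 * K3 ^ 2 * κ6 ^ 2 * κ12 ^ 2 * x2 ^ 4)

/-- The bivariate polynomial `p_{η,H}` supported on the hexagonal face `H`. -/
def pEtaH (K1 K2 K3 K4 κ3 κ6 κ9 κ12 x1 x3 : ℝ) : ℝ :=
  K2 * κ3 * (κ3 * κ12 - κ6 * κ9) *
      (K2 * K4 * κ3 * κ9 * x1 ^ 4 * x3 ^ 2 + K1 * K3 * κ6 * κ12 * x1 ^ 2 * x3 ^ 2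
        + K2 * K3 * κ3 * κ12 * x1 ^ 3 * x3 ^ 2)
    + K1 * K2 * K3 * κ3 * κ6 * κ12 * ((K2 + K3) * κ3 * κ12 - (K1 + K4) * κ6 * κ9)
        * x1 ^ 2 * x3
    + K1 * κ6 *
        (K2 ^ 2 * K4 * κ3 ^ 2 * κ9 ^ 2 * x1 ^ 4 * x3
          + 2 * K2 * K3 * K4 * κ3 ^ 2 * κ9 * κ12 * x1 ^ 3 * x3
          + K1 * K2 * K3 * K4 * κ3 * κ6 * κ9 * κ12 * x1 ^ 2
          + 2 * K1 * K2 * K3 * κ3 * κ6 * κ12 ^ 2 * x1 * x3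
          + K1 * K2 * K3 ^ 2 * κ3 * κ6 * κ12 ^ 2 * x1
          + K1 * K3 ^ 2 * κ6 ^ 2 * κ12 ^ 2 * x3
          + K1 ^ 2 * K3 ^ 2 * κ6 ^ 2 * κ12 ^ 2)


private lemma aux_nonneg (A C : ℝ) (hC : 0 ≤ C)
    (h : ∀ t : ℝ, 0 < t → 0 ≤ A + t * C) : 0 ≤ A := by
  by_contra hA
  push_neg at hA
  rcases eq_or_lt_of_le hC with hC0 | hC0
  · nlinarith [h 1 one_pos]
  · have := h (-A / (2 * C)) (div_pos (by linarith) (by linarith))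
    have heq : -A / (2 * C) * C = -A / 2 := by
      field_simp
    rw [heq] at this
    linarith

/-- For `a(η) ≥ 0`, the trivariate polynomial `p_η` is nonnegative on the
positive orthant if and only if its restriction `p_{η,H}` to the hexagonal face is. -/
theorem pEta_nonneg_iff_pEtaH_nonneg
    (K1 K2 K3 K4 κ3 κ6 κ9 κ12 : ℝ)
    (hK1 : 0 < K1) (hK2 : 0 < K2) (hK3 : 0 < K3) (hK4 : 0 < K4)
    (hκ3 : 0 < κ3) (hκ6 : 0 < κ6) (hκ9 : 0 < κ9) (hκ12 : 0 < κ12)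
    (ha : 0 ≤ κ3 * κ12 - κ6 * κ9) :
    (∀ x1 x2 x3 : ℝ, 0 < x1 → 0 < x2 → 0 < x3 →
        0 ≤ pEta K1 K2 K3 K4 κ3 κ6 κ9 κ12 x1 x2 x3) ↔
      (∀ x1 x3 : ℝ, 0 < x1 → 0 < x3 →
        0 ≤ pEtaH K1 K2 K3 K4 κ3 κ6 κ9 κ12 x1 x3) := by
  set a := κ3 * κ12 - κ6 * κ9 with ha_def
  constructor
  · intro H x1 x3 hx1 hx3
    set C : ℝ := K2 * κ3 * a * (K1 * K3 * κ6 * κ12) * (x1 ^ 3 * x3 + x1 ^ 2 * x3)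
      + K1 * κ6 * (K1 * K2 * K3 * κ3 * κ6 * κ12 * (κ9 + κ12) * x1 ^ 2
        + K1 * K3 ^ 2 * κ6 * κ12 ^ 2 * (κ3 + κ6) * x1) with hC_def
    have hC : 0 ≤ C := by
      refine add_nonneg (mul_nonneg (mul_nonneg (mul_nonneg (mul_nonneg hK2.le hκ3.le) ha)
        (by positivity)) (by positivity)) (by positivity)
    refine aux_nonneg _ C hC ?_
    intro t ht
    have key : pEta K1 K2 K3 K4 κ3 κ6 κ9 κ12 (t * x1) t x3
        = t ^ 4 * (pEtaH K1 K2 K3 K4 κ3 κ6 κ9 κ12 x1 x3 + t * C) := by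
      simp only [pEta, pEtaH, hC_def, ha_def]
      ring
    have h0 := H (t * x1) t x3 (by positivity) ht hx3
    rw [key] at h0
    have ht4 : (0:ℝ) < t ^ 4 := by positivity
    exact nonneg_of_mul_nonneg_right h0 ht4
  · intro H x1 x2 x3 hx1 hx2 hx3
    have key : pEta K1 K2 K3 K4 κ3 κ6 κ9 κ12 x1 x2 x3
        = x2 ^ 4 * pEtaH K1 K2 K3 K4 κ3 κ6 κ9 κ12 (x1 / x2) x3
          + (K2 * κ3 * a * (K1 * K3 * κ6 * κ12)
              * (x1 ^ 3 * x2 ^ 2 * x3 + x1 ^ 2 * x2 ^ 3 * x3)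
            + K1 * κ6 * (K1 * K2 * K3 * κ3 * κ6 * κ12 * (κ9 + κ12) * x1 ^ 2 * x2 ^ 3
              + K1 * K3 ^ 2 * κ6 * κ12 ^ 2 * (κ3 + κ6) * x1 * x2 ^ 4)) := by
      simp only [pEta, pEtaH, ha_def]
      field_simp
      ring
    rw [key]
    have h1 := H (x1 / x2) x3 (by positivity) hx3
    have h2 : 0 ≤ K2 * κ3 * a * (K1 * K3 * κ6 * κ12)
        * (x1 ^ 3 * x2 ^ 2 * x3 + x1 ^ 2 * x2 ^ 3 * x3)
      + K1 * κ6 * (K1 * K2 * K3 * κ3 * κ6 * κ12 * (κ9 + κ12) * x1 ^ 2 * x2 ^ 3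
        + K1 * K3 ^ 2 * κ6 * κ12 ^ 2 * (κ3 + κ6) * x1 * x2 ^ 4) :=
      add_nonneg (mul_nonneg (mul_nonneg (mul_nonneg (mul_nonneg hK2.le hκ3.le) ha)
        (by positivity)) (by positivity)) (by positivity)
    exact add_nonneg (mul_nonneg (by positivity) h1) h2
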